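/- Let P = (PV, L, ℓ0, T) be an integer program and let C = {t1,...,tn} ⊂ T be a simple cycle: no transition of C contains temporary variables, and there are pairwise different locations ℓ1,...,ℓn with t_i = (ℓ_i, _, _, ℓ_{i+1}) for 1 ≤ i ≤ n−1 and t_n = (ℓ_n, _, _, ℓ1). For each entry transition r ∈ E_C whose target location is ℓ_i, let t = t_i ⋆ ... ⋆ t_n ⋆ t_1 ⋆ ... ⋆ t_{i−1} be the chained transition (a self-loop at ℓ_i). Suppose that for some entry transitions r we have a bound b_r ∈ B with |σ|(b_r) ≥ sup{k ∈ ℕ : ∃σ0, σ', (ℓ0,σ0) →*_T ∘ →_r (ℓ_i,σ) →_t^k (ℓ_i,σ')} for all states σ. Then RBloc : E_C → B defined by RBloc(r) = 1 + b_r for those r and RBloc(r) = ω for all other entry transitions is a local runtime bound for C = T'_> = T' in P. -/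

import Mathlib

open scoped Classical

noncomputable section

namespace Koat

/-! ### Formulas over polynomial atoms `p < q` -/

inductive Fml (V : Type*) where
  | lt  : MvPolynomial V ℤ → MvPolynomial V ℤ → Fml V
  | and : Fml V → Fml V → Fml V
  | or  : Fml V → Fml V → Fml V

namespace Fml

variable {V : Type*}

/-- A formula holds in a state `σ : V → ℤ`. -/
def holds (σ : V → ℤ) : Fml V → Prop
  | .lt p q  => MvPolynomial.eval σ p < MvPolynomial.eval σ q
  | .and f g => holds σ f ∧ holds σ g
  | .or f g  => holds σ f ∨ holds σ g

/-- Applying an update `η` to a formula (substituting `η v` for each variable `v`). -/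
def subst (η : V → MvPolynomial V ℤ) : Fml V → Fml V
  | .lt p q  => .lt (MvPolynomial.bind₁ η p) (MvPolynomial.bind₁ η q)
  | .and f g => .and (subst η f) (subst η g)
  | .or f g  => .or (subst η f) (subst η g)

/-- The variables occurring in a formula. -/
def vars : Fml V → Finset V
  | .lt p q  => p.vars ∪ q.vars
  | .and f g => vars f ∪ vars g
  | .or f g  => vars f ∪ vars g

/-- The list of atoms `(s₁, s₂)` (meaning `s₁ < s₂`) occurring in a formula. -/
def atoms : Fml V → List (MvPolynomial V ℤ × MvPolynomial V ℤ)
  | .lt p q  => [(p, q)]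
  | .and f g => atoms f ++ atoms g
  | .or f g  => atoms f ++ atoms g

end Fml

/-! ### Bounds -/

/-- The set `𝓑` of bounds: built from `ℕ ∪ {ω}`, variables, `+`, `·`, `k^{·}`. -/
inductive Bnd (V : Type*) where
  | const : ℕ∞ → Bnd V
  | var : V → Bnd V
  | add : Bnd V → Bnd V → Bnd V
  | mul : Bnd V → Bnd V → Bnd V
  | exp : ℕ → Bnd V → Bnd V

/-- `k ^ e` for `e : ℕ∞`. -/
def epow (k : ℕ) (e : ℕ∞) : ℕ∞ := if e = ⊤ then ⊤ else ((k ^ e.toNat : ℕ) : ℕ∞)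

namespace Bnd

variable {V : Type*}

/-- Evaluation of a bound in a (non-negative) state, with values in `ℕ ∪ {ω}`. -/
def eval (σ : V → ℕ) : Bnd V → ℕ∞
  | .const c => c
  | .var v => (σ v : ℕ∞)
  | .add b₁ b₂ => eval σ b₁ + eval σ b₂
  | .mul b₁ b₂ => eval σ b₁ * eval σ b₂
  | .exp k b => epow k (eval σ b)

/-- `b [v / f v | v ∈ PV]`: substitute the bound `f v` for every program variable `v ∈ PV`. -/
def substOn (PV : Set V) (f : V → Bnd V) : Bnd V → Bnd V
  | .const c => .const c
  | .var v => if v ∈ PV then f v else .var v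
  | .add b₁ b₂ => .add (substOn PV f b₁) (substOn PV f b₂)
  | .mul b₁ b₂ => .mul (substOn PV f b₁) (substOn PV f b₂)
  | .exp k b => .exp k (substOn PV f b)

end Bnd

/-- The sum of a list of bounds. -/
def bndSum {V : Type*} (l : List (Bnd V)) : Bnd V := l.foldr Bnd.add (Bnd.const 0)

/-! ### Integer programs -/

/-- A transition `(ℓ, φ, η, ℓ')`. -/
structure Trans (L V : Type*) where
  src : L
  guard : Fml V
  update : V → MvPolynomial V ℤ
  tgt : L

/-- A configuration `(ℓ, σ)`. -/
abbrev Config (L V : Type*) := L × (V → ℤ)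

/-- The evaluation step `(ℓ, σ) →_t (ℓ', σ')`: program variables are updated by `t.update`,
temporary variables (those outside `PV`) get arbitrary values. -/
def Step {L V : Type*} (PV : Set V) (t : Trans L V) (c c' : Config L V) : Prop :=
  c.1 = t.src ∧ c'.1 = t.tgt ∧ t.guard.holds c.2 ∧
    ∀ v ∈ PV, c'.2 v = MvPolynomial.eval c.2 (t.update v)

/-- `→_S`, the union of `→_t` over `t ∈ S`. -/
def StepAny {L V : Type*} (PV : Set V) (S : Finset (Trans L V)) :
    Config L V → Config L V → Prop :=
  fun c c' => ∃ t ∈ S, Step PV t c c'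

/-- `k`-fold composition of a relation. -/
def relPow {α : Type*} (R : α → α → Prop) : ℕ → α → α → Prop
  | 0 => Eq
  | n + 1 => Relation.Comp (relPow R n) R

/-- `→*_S ∘ →_t`. -/
def starThen {L V : Type*} (PV : Set V) (S : Finset (Trans L V)) (t : Trans L V) :
    Config L V → Config L V → Prop :=
  Relation.Comp (Relation.ReflTransGen (StepAny PV S)) (Step PV t)

/-- `|σ|`, the state of absolute values. -/
def absState {V : Type*} (σ : V → ℤ) : V → ℕ := fun v => (σ v).natAbs

/-- `RB` is a global runtime bound for the program `(PV, L, ℓ₀, T)`. -/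
def IsGlobalRB {L V : Type*} (PV : Set V) (ℓ₀ : L) (T : Finset (Trans L V))
    (RB : Trans L V → Bnd V) : Prop :=
  ∀ t ∈ T, ∀ σ₀ : V → ℤ,
    (⨆ k ∈ {k : ℕ | ∃ c' : Config L V, relPow (starThen PV T t) k (ℓ₀, σ₀) c'}, (k : ℕ∞))
      ≤ (RB t).eval (absState σ₀)

/-- `SB` is a size bound for the program `(PV, L, ℓ₀, T)`. -/
def IsSizeBound {L V : Type*} (PV : Set V) (ℓ₀ : L) (T : Finset (Trans L V))
    (SB : Trans L V → V → Bnd V) : Prop :=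
  ∀ t ∈ T, ∀ v ∈ PV, ∀ σ₀ : V → ℤ,
    (⨆ s ∈ {s : ℕ | ∃ c' : Config L V, starThen PV T t (ℓ₀, σ₀) c' ∧ s = (c'.2 v).natAbs},
      (s : ℕ∞)) ≤ (SB t v).eval (absState σ₀)

/-- The entry transitions `E_{T'}`. -/
def entrySet {L V : Type*} (T T' : Finset (Trans L V)) : Set (Trans L V) :=
  {t | t ∈ T ∧ t ∉ T' ∧ ∃ t' ∈ T', t'.src = t.tgt}

/-- `RB` is a local runtime bound for `T'gt` w.r.t. `T'` in the program `(PV, L, ℓ₀, T)`. -/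
def IsLocalRB {L V : Type*} (PV : Set V) (ℓ₀ : L) (T T'gt T' : Finset (Trans L V))
    (RB : Trans L V → Bnd V) : Prop :=
  ∀ t ∈ T'gt, ∀ r ∈ entrySet T T', ∀ σ : V → ℤ,
    (⨆ k ∈ {k : ℕ | ∃ (σ₀ : V → ℤ) (c' : Config L V),
        starThen PV T r (ℓ₀, σ₀) (r.tgt, σ) ∧ relPow (starThen PV T' t) k (r.tgt, σ) c'},
      (k : ℕ∞)) ≤ (RB r).eval (absState σ)

/-- Chaining two transitions: `t₁ ⋆ t₂`. -/
def chain2 {L V : Type*} (t₁ t₂ : Trans L V) : Trans L V :=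
  ⟨t₁.src, (t₁.guard).and (t₂.guard.subst t₁.update),
    fun v => MvPolynomial.bind₁ t₁.update (t₂.update v), t₂.tgt⟩

/-- Chaining a (nonempty) list of transitions `t₁ ⋆ ⋯ ⋆ tₙ` (with a default for `[]`). -/
def chainFold {L V : Type*} (dflt : Trans L V) : List (Trans L V) → Trans L V
  | [] => dflt
  | t :: ts => ts.foldl chain2 t

/-- The composed evaluation relation `→_{t₁} ∘ ⋯ ∘ →_{tₙ}`. -/
def stepsList {L V : Type*} (PV : Set V) : List (Trans L V) → Config L V → Config L V → Prop
  | [] => Eq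
  | t :: ts => Relation.Comp (Step PV t) (stepsList PV ts)

/-! ### Twn-loops -/

/-- An update `η` as a function on states `ℤ^d → ℤ^d`. -/
def updFun {d : ℕ} (η : Fin d → MvPolynomial (Fin d) ℤ) (σ : Fin d → ℤ) : Fin d → ℤ :=
  fun i => MvPolynomial.eval σ (η i)

/-- `η` is triangular weakly non-linear with data `c`, `p`:
`η xᵢ = cᵢ·xᵢ + pᵢ` with `pᵢ ∈ ℤ[x_{i+1},…,x_d]`. -/
def IsTriangular {d : ℕ} (η : Fin d → MvPolynomial (Fin d) ℤ) (c : Fin d → ℤ)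
    (p : Fin d → MvPolynomial (Fin d) ℤ) : Prop :=
  ∀ i, η i = MvPolynomial.C (c i) * MvPolynomial.X i + p i ∧ ∀ j ∈ (p i).vars, i < j

/-- Triangular weakly non-linear update. -/
def IsTWN {d : ℕ} (η : Fin d → MvPolynomial (Fin d) ℤ) : Prop :=
  ∃ c p, IsTriangular η c p

/-- Triangular weakly non-linear update with non-negative coefficients. -/
def IsTNN {d : ℕ} (η : Fin d → MvPolynomial (Fin d) ℤ) : Prop :=
  ∃ c p, IsTriangular η c p ∧ ∀ i, 0 ≤ c i

/-- `(b₁,a₁) >_lex (b₂,a₂)`. -/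
def lexGt (b₁ a₁ b₂ a₂ : ℕ) : Prop := b₂ < b₁ ∨ (b₁ = b₂ ∧ a₂ < a₁)

/-- The set of all valid `k`-monotonicity thresholds of `(b₁,a₁)` and `(b₂,a₂)`. -/
def mthSet (k b₁ a₁ b₂ a₂ : ℕ) : Set ℕ :=
  {n₀ | ∀ n ≥ n₀, k * (n ^ a₂ * b₂ ^ n) < n ^ a₁ * b₁ ^ n}

/-- The `k`-monotonicity threshold of `(b₁,a₁)` and `(b₂,a₂)` (the smallest member of
`mthSet`, when it exists). -/
def mth (k b₁ a₁ b₂ a₂ : ℕ) : ℕ := sInf (mthSet k b₁ a₁ b₂ a₂)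

/-- `M_j` as in the paper. -/
def Mdef (b a : ℕ → ℕ) (j : ℕ) : ℕ :=
  if b j = b (j - 1) then 0 else mth 1 (b j) (a j) (b (j - 1)) (a (j - 1) + 1)

/-- `N_j` as in the paper. -/
def Ndef (b a : ℕ → ℕ) (j : ℕ) : ℕ :=
  if j = 2 then 1
  else if j = 3 then mth 1 (b 2) (a 2) (b 1) (a 1)
  else
    max ((Finset.Icc 1 (j - 3)).sup fun i => mth 1 (b (j - 2)) (a (j - 2)) (b i) (a i))
      (mth (j - 2) (b (j - 1)) (a (j - 1)) (b (j - 2)) (a (j - 2)))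

/-- The over-approximation `⊔ {p j | j ∈ s}`: each monomial gets the maximal absolute value
of its coefficients in the `p j`. -/
def sqcupF {d : ℕ} {ι : Type*} (s : Finset ι) (p : ι → MvPolynomial (Fin d) ℤ) :
    MvPolynomial (Fin d) ℤ :=
  ∑ m ∈ s.biUnion fun j => (p j).support,
    MvPolynomial.monomial m (((s.sup fun j => ((p j).coeff m).natAbs : ℕ) : ℤ))

/-- Normalized poly-exponential expressions, as finite (formal) sums of
`p · n^a · b^n` with `p ∈ ℚ[x₁,…,x_d]`. -/
abbrev NPE (d : ℕ) := List (MvPolynomial (Fin d) ℚ × ℕ × ℕ)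

/-- The value of a normalized poly-exponential expression at `(e, n)`. -/
def evalNPE {d : ℕ} (l : NPE d) (e : Fin d → ℤ) (n : ℕ) : ℚ :=
  (l.map fun tr =>
    MvPolynomial.eval (fun i => (e i : ℚ)) tr.1 * (n : ℚ) ^ tr.2.1 * (tr.2.2 : ℚ) ^ n).sum



/-! ### Auxiliary lemmas for Statement 15 -/

section Aux

variable {L V : Type*} {PV : Set V}

lemma eval_congr_on {p : MvPolynomial V ℤ} (hp : ↑p.vars ⊆ PV)
    {σ σ' : V → ℤ} (h : ∀ v ∈ PV, σ v = σ' v) :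
    MvPolynomial.eval σ p = MvPolynomial.eval σ' p :=
  MvPolynomial.eval₂Hom_congr' rfl (fun i hi _ => h i (hp hi)) rfl

lemma holds_congr_on : ∀ {f : Fml V}, ↑f.vars ⊆ PV →
    ∀ {σ σ' : V → ℤ}, (∀ v ∈ PV, σ v = σ' v) → (f.holds σ ↔ f.holds σ')
  | .lt p q, hv, σ, σ', h => by
      have hp : ↑p.vars ⊆ PV := fun x hx => hv (by
        simpa [Fml.vars] using Or.inl hx)
      have hq : ↑q.vars ⊆ PV := fun x hx => hv (by
        simpa [Fml.vars] using Or.inr hx)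
      simp [Fml.holds, eval_congr_on hp h, eval_congr_on hq h]
  | .and f g, hv, σ, σ', h => by
      have hf : ↑f.vars ⊆ PV := fun x hx => hv (by simpa [Fml.vars] using Or.inl hx)
      have hg : ↑g.vars ⊆ PV := fun x hx => hv (by simpa [Fml.vars] using Or.inr hx)
      simp [Fml.holds, holds_congr_on hf h, holds_congr_on hg h]
  | .or f g, hv, σ, σ', h => by
      have hf : ↑f.vars ⊆ PV := fun x hx => hv (by simpa [Fml.vars] using Or.inl hx)
      have hg : ↑g.vars ⊆ PV := fun x hx => hv (by simpa [Fml.vars] using Or.inr hx)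
      simp [Fml.holds, holds_congr_on hf h, holds_congr_on hg h]

lemma eval_bind₁' (η : V → MvPolynomial V ℤ) (σ : V → ℤ) (p : MvPolynomial V ℤ) :
    MvPolynomial.eval σ (MvPolynomial.bind₁ η p)
      = MvPolynomial.eval (fun v => MvPolynomial.eval σ (η v)) p :=
  MvPolynomial.eval₂Hom_bind₁ (RingHom.id ℤ) σ η p

lemma holds_subst (η : V → MvPolynomial V ℤ) (σ : V → ℤ) :
    ∀ f : Fml V, (f.subst η).holds σ ↔ f.holds (fun v => MvPolynomial.eval σ (η v))
  | .lt p q => by simp [Fml.subst, Fml.holds, eval_bind₁']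
  | .and f g => by simp [Fml.subst, Fml.holds, holds_subst η σ f, holds_subst η σ g]
  | .or f g => by simp [Fml.subst, Fml.holds, holds_subst η σ f, holds_subst η σ g]

/-- A transition without temporary variables (the parts we need). -/
def Clean (PV : Set V) (t : Trans L V) : Prop :=
  ↑t.guard.vars ⊆ PV ∧ ∀ v ∈ PV, ↑(t.update v).vars ⊆ PV

lemma step_chain2 {t₁ t₂ : Trans L V} (h₂ : Clean PV t₂)
    {c c₁ c₂ : Config L V} (s₁ : Step PV t₁ c c₁) (s₂ : Step PV t₂ c₁ c₂) :
    Step PV (chain2 t₁ t₂) c c₂ := by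
  obtain ⟨hsrc₁, htgt₁, hg₁, hu₁⟩ := s₁
  obtain ⟨hsrc₂, htgt₂, hg₂, hu₂⟩ := s₂
  have hagree : ∀ v ∈ PV, c₁.2 v = MvPolynomial.eval c.2 (t₁.update v) := hu₁
  refine ⟨hsrc₁, htgt₂, ⟨hg₁, ?_⟩, ?_⟩
  · rw [holds_subst]
    exact (holds_congr_on h₂.1 hagree).mp hg₂
  · intro v hv
    have hch : (chain2 t₁ t₂).update v = MvPolynomial.bind₁ t₁.update (t₂.update v) := rfl
    rw [hch, eval_bind₁', hu₂ v hv]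
    exact eval_congr_on (h₂.2 v hv) hagree

lemma clean_chain2 {t₁ t₂ : Trans L V} (h₁ : Clean PV t₁) (h₂ : Clean PV t₂) :
    Clean PV (chain2 t₁ t₂) := by
  classical
  have hbind : ∀ p : MvPolynomial V ℤ, ↑p.vars ⊆ PV →
      ↑(MvPolynomial.bind₁ t₁.update p).vars ⊆ PV := by
    intro p hp x hx
    have hx' : x ∈ (MvPolynomial.bind₁ t₁.update p).vars := hx
    rcases MvPolynomial.mem_vars_bind₁ _ _ hx' with ⟨j, hj, hxj⟩
    exact h₁.2 j (hp hj) hxj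
  constructor
  · -- guard vars
    have : ∀ f : Fml V, ↑f.vars ⊆ PV → ↑(f.subst t₁.update).vars ⊆ PV := by
      intro f
      induction f with
      | lt p q =>
          intro hv x hx
          simp only [Fml.subst, Fml.vars, Finset.coe_union, Set.mem_union, Finset.mem_coe,
            Finset.mem_union] at hx ⊢
          have hp : ↑p.vars ⊆ PV := fun y hy => hv (by
            simp only [Fml.vars, Finset.coe_union, Set.mem_union, Finset.mem_coe]
            exact Or.inl hy)
          have hq : ↑q.vars ⊆ PV := fun y hy => hv (by
            simp only [Fml.vars, Finset.coe_union, Set.mem_union, Finset.mem_coe]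
            exact Or.inr hy)
          rcases hx with hx | hx
          · exact hbind p hp hx
          · exact hbind q hq hx
      | and f g ihf ihg =>
          intro hv x hx
          simp only [Fml.subst, Fml.vars, Finset.coe_union, Set.mem_union, Finset.mem_coe] at hx
          have hf : ↑f.vars ⊆ PV := fun y hy => hv (by
            simp only [Fml.vars, Finset.coe_union, Set.mem_union, Finset.mem_coe]
            exact Or.inl hy)
          have hg : ↑g.vars ⊆ PV := fun y hy => hv (by
            simp only [Fml.vars, Finset.coe_union, Set.mem_union, Finset.mem_coe]
            exact Or.inr hy)
          rcases hx with hx | hx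
          · exact ihf hf hx
          · exact ihg hg hx
      | or f g ihf ihg =>
          intro hv x hx
          simp only [Fml.subst, Fml.vars, Finset.coe_union, Set.mem_union, Finset.mem_coe] at hx
          have hf : ↑f.vars ⊆ PV := fun y hy => hv (by
            simp only [Fml.vars, Finset.coe_union, Set.mem_union, Finset.mem_coe]
            exact Or.inl hy)
          have hg : ↑g.vars ⊆ PV := fun y hy => hv (by
            simp only [Fml.vars, Finset.coe_union, Set.mem_union, Finset.mem_coe]
            exact Or.inr hy)
          rcases hx with hx | hx
          · exact ihf hf hx
          · exact ihg hg hx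
    intro x hx
    simp only [chain2, Fml.vars, Finset.coe_union, Set.mem_union, Finset.mem_coe] at hx
    rcases hx with hx | hx
    · exact h₁.1 hx
    · exact this _ h₂.1 hx
  · intro v hv
    exact hbind _ (h₂.2 v hv)

lemma stepsList_chainFold (d : Trans L V) :
    ∀ (l : List (Trans L V)) (t : Trans L V), Clean PV t → (∀ u ∈ l, Clean PV u) →
      ∀ {c c' : Config L V}, stepsList PV (t :: l) c c' → Step PV (chainFold d (t :: l)) c c'
  | [], t, _, _, c, c', h => by
      obtain ⟨c₁, h₁, h₂⟩ := h
      cases h₂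
      exact h₁
  | u :: l, t, hct, hcl, c, c', h => by
      obtain ⟨c₁, h₁, c₂, h₂, h₃⟩ := h
      have hcu : Clean PV u := hcl u (by simp)
      have hstep : Step PV (chain2 t u) c c₂ := step_chain2 hcu h₁ h₂
      have := stepsList_chainFold d l (chain2 t u) (clean_chain2 hct hcu)
        (fun w hw => hcl w (by simp [hw])) ⟨c₂, hstep, h₃⟩
      simpa [chainFold, List.foldl] using this

lemma relPow_add_iff {α : Type*} (R : α → α → Prop) (a : ℕ) :
    ∀ (b : ℕ) {x z : α}, relPow R (a + b) x z ↔ ∃ y, relPow R a x y ∧ relPow R b y z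
  | 0, x, z => by
      constructor
      · intro h; exact ⟨z, h, rfl⟩
      · rintro ⟨y, h, rfl⟩; exact h
  | b + 1, x, z => by
      constructor
      · rintro ⟨y, hy, hR⟩
        rcases (relPow_add_iff R a b).mp hy with ⟨w, hw, hwb⟩
        exact ⟨w, hw, y, hwb, hR⟩
      · rintro ⟨y, hy, w, hw, hR⟩
        exact ⟨w, (relPow_add_iff R a b).mpr ⟨y, hy, hw⟩, hR⟩

lemma relPow_one_iff {α : Type*} (R : α → α → Prop) {x z : α} :
    relPow R 1 x z ↔ R x z := by
  constructor
  · rintro ⟨y, rfl, h⟩; exact h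
  · intro h; exact ⟨x, rfl, h⟩

lemma reflTransGen_relPow {α : Type*} {R : α → α → Prop} {x z : α}
    (h : Relation.ReflTransGen R x z) : ∃ n, relPow R n x z := by
  induction h with
  | refl => exact ⟨0, rfl⟩
  | tail _ hstep ih => obtain ⟨n, hn⟩ := ih; exact ⟨n + 1, _, hn, hstep⟩

/-- The infinite cyclic word of transitions. -/
def wordOf (ts : List (Trans L V)) (hn : 0 < ts.length) (p : ℕ) : Trans L V :=
  ts.get ⟨p % ts.length, Nat.mod_lt _ hn⟩

lemma force {T' : Finset (Trans L V)} {ts : List (Trans L V)} (hn : 0 < ts.length)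
    (hT' : ∀ u ∈ T', u ∈ ts)
    (hsrcinj : ∀ a b : Fin ts.length, (ts.get a).src = (ts.get b).src → a = b)
    (hstep : ∀ q : ℕ, (wordOf ts hn q).tgt = (wordOf ts hn (q + 1)).src) :
    ∀ (m q : ℕ) (c c' : Config L V), c.1 = (wordOf ts hn q).src →
      relPow (StepAny PV T') m c c' →
      stepsList PV ((List.range' q m).map (wordOf ts hn)) c c' ∧
        c'.1 = (wordOf ts hn (q + m)).src
  | 0, q, c, c', hc, h => by
      cases h
      exact ⟨rfl, hc⟩
  | m + 1, q, c, c', hc, h => by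
      have h' : ∃ y, StepAny PV T' c y ∧ relPow (StepAny PV T') m y c' := by
        have h1m : relPow (StepAny PV T') (1 + m) c c' := by rwa [Nat.add_comm 1 m]
        rcases (relPow_add_iff (StepAny PV T') 1 m).mp h1m with ⟨y, h1, hm⟩
        exact ⟨y, (relPow_one_iff _).mp h1, hm⟩
      obtain ⟨y, ⟨u, huT, hustep⟩, hrest⟩ := h'
      -- the transition used must be `wordOf ts hn q`
      obtain ⟨a, ha⟩ := List.mem_iff_get.mp (hT' u huT)
      have hsrcu : (ts.get a).src = (ts.get ⟨q % ts.length, Nat.mod_lt _ hn⟩).src := by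
        rw [ha]
        rw [← hustep.1, hc]; rfl
      have hau : u = wordOf ts hn q := by
        rw [← ha, wordOf]
        exact congrArg ts.get (hsrcinj _ _ hsrcu)
      have hy : y.1 = (wordOf ts hn (q + 1)).src := by
        rw [← hstep q, ← hau]
        exact hustep.2.1
      have ih := force hn hT' hsrcinj hstep m (q + 1) y c' hy hrest
      constructor
      · rw [List.range'_succ, List.map_cons]
        exact ⟨y, hau ▸ hustep, ih.1⟩
      · have : q + 1 + m = q + (m + 1) := by ring
        rw [← this]; exact ih.2

lemma range'_map_wordOf {ts : List (Trans L V)} (hn : 0 < ts.length)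
    (i : ℕ) (hi : i < ts.length) :
    (List.range' i ts.length).map (wordOf ts hn) = ts.rotate i := by
  apply List.ext_get
  · simp
  intro k h1 h2
  rw [List.get_rotate]
  have hk : k < (List.range' i ts.length).length := by simpa using h1
  rw [List.get_eq_getElem, List.getElem_map]
  unfold wordOf
  congr 1
  apply Fin.ext
  simp only [List.get_eq_getElem, List.getElem_range', one_mul]
  rw [Nat.add_comm]

lemma cycles {T' : Finset (Trans L V)} {ts : List (Trans L V)} (hn : 0 < ts.length)
    (hT' : ∀ u ∈ T', u ∈ ts)
    (hsrcinj : ∀ a b : Fin ts.length, (ts.get a).src = (ts.get b).src → a = b)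
    (hstep : ∀ q : ℕ, (wordOf ts hn q).tgt = (wordOf ts hn (q + 1)).src)
    (hclean : ∀ u ∈ ts, Clean PV u)
    (r : Trans L V) (i : Fin ts.length) :
    ∀ (q : ℕ) (σ : V → ℤ) (c' : Config L V),
      relPow (StepAny PV T') (q * ts.length) ((ts.get i).src, σ) c' →
      relPow (Step PV (chainFold r (ts.rotate ↑i))) q ((ts.get i).src, σ) c' ∧
        c'.1 = (ts.get i).src
  | 0, σ, c', h => by
      rw [Nat.zero_mul] at h; cases h; exact ⟨rfl, rfl⟩
  | q + 1, σ, c', h => by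
      have hwi : wordOf ts hn ↑i = ts.get i := by
        unfold wordOf; congr 1; exact Fin.ext (Nat.mod_eq_of_lt i.isLt)
      have hsplit : (q + 1) * ts.length = q * ts.length + ts.length := by ring
      rw [hsplit] at h
      obtain ⟨c₁, hq, hlastn⟩ := (relPow_add_iff _ _ _).mp h
      have ih := cycles hn hT' hsrcinj hstep hclean r i q σ c₁ hq
      have hc₁ : c₁.1 = (wordOf ts hn ↑i).src := by rw [hwi]; exact ih.2
      have hforce := force hn hT' hsrcinj hstep ts.length ↑i c₁ c' hc₁ hlastn
      have hrot : (List.range' (↑i) ts.length).map (wordOf ts hn) = ts.rotate ↑i :=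
        range'_map_wordOf hn _ i.isLt
      rw [hrot] at hforce
      have hrotne : ts.rotate ↑i ≠ [] := by
        intro hemp
        have := List.length_rotate ts ↑i
        rw [hemp] at this
        simp at this
        omega
      obtain ⟨hd, tl, hcons⟩ := List.exists_cons_of_ne_nil hrotne
      have hcleanrot : ∀ u ∈ ts.rotate ↑i, Clean PV u := fun u hu =>
        hclean u (List.mem_rotate.mp hu)
      have hstepc : Step PV (chainFold r (ts.rotate ↑i)) c₁ c' := by
        rw [hcons]
        refine stepsList_chainFold r tl hd ?_ ?_ ?_
        · exact hcleanrot hd (by rw [hcons]; simp)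
        · intro u hu; exact hcleanrot u (by rw [hcons]; simp [hu])
        · rw [← hcons]; exact hforce.1
      constructor
      · exact ⟨c₁, ih.1, hstepc⟩
      · have : c'.1 = (wordOf ts hn (↑i + ts.length)).src := hforce.2
        rw [this, ← hwi]
        unfold wordOf
        congr 3
        rw [Nat.add_mod_right]

lemma count {T' : Finset (Trans L V)} {ts : List (Trans L V)} (hn : 0 < ts.length)
    (hT' : ∀ u ∈ T', u ∈ ts)
    (hsrcinj : ∀ a b : Fin ts.length, (ts.get a).src = (ts.get b).src → a = b)
    (hstep : ∀ q : ℕ, (wordOf ts hn q).tgt = (wordOf ts hn (q + 1)).src)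
    (t : Trans L V) (htT : t ∈ T') (j : Fin ts.length) (hj : ts.get j = t) (q₀ : ℕ) :
    ∀ (k : ℕ) (c₀ c' : Config L V), c₀.1 = (wordOf ts hn q₀).src →
      relPow (starThen PV T' t) k c₀ c' →
      ∃ m, relPow (StepAny PV T') m c₀ c' ∧
        (k = 0 ∧ m = 0 ∨ 1 ≤ k ∧ (k - 1) * ts.length + 1 ≤ m ∧
          (q₀ + m) % ts.length = (↑j + 1) % ts.length)
  | 0, c₀, c', hc₀, h => by cases h; exact ⟨0, rfl, Or.inl ⟨rfl, rfl⟩⟩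
  | k + 1, c₀, c', hc₀, h => by
      obtain ⟨c₁, hk, c₂, hrtg, hstept⟩ := h
      obtain ⟨m, hm, hcase⟩ := count hn hT' hsrcinj hstep t htT j hj q₀ k c₀ c₁ hc₀ hk
      obtain ⟨a, ha⟩ := reflTransGen_relPow hrtg
      have hma : relPow (StepAny PV T') (m + a) c₀ c₂ :=
        (relPow_add_iff _ _ _).mpr ⟨c₁, hm, ha⟩
      have hm' : relPow (StepAny PV T') (m + a + 1) c₀ c' :=
        ⟨c₂, hma, t, htT, hstept⟩
      -- position of the final `t`-step
      have hc₂ : c₂.1 = (wordOf ts hn (q₀ + (m + a))).src :=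
        (force hn hT' hsrcinj hstep (m + a) q₀ c₀ c₂ hc₀ hma).2
      have hsrceq : (ts.get ⟨(q₀ + (m + a)) % ts.length, Nat.mod_lt _ hn⟩).src
          = (ts.get j).src := by
        rw [hj]
        rw [← hstept.1]
        exact hc₂.symm
      have hidx : (q₀ + (m + a)) % ts.length = ↑j :=
        congrArg Fin.val (hsrcinj _ _ hsrceq)
      have hmodeq : (q₀ + (m + a + 1)) % ts.length = (↑j + 1) % ts.length := by
        have h1 : (q₀ + (m + a)) % ts.length = (↑j : ℕ) % ts.length := by
          rw [hidx, Nat.mod_eq_of_lt j.isLt]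
        have h2 : q₀ + (m + a) + 1 ≡ ↑j + 1 [MOD ts.length] :=
          Nat.ModEq.add_right 1 h1
        have h3 : q₀ + (m + a + 1) = q₀ + (m + a) + 1 := by ring
        rw [h3]; exact h2
      refine ⟨m + a + 1, hm', Or.inr ⟨Nat.le_add_left 1 (k + 1 - 1), ?_, hmodeq⟩⟩
      rcases hcase with ⟨hk0, hm0⟩ | ⟨hk1, hmb, hmc⟩
      · subst hm0
        simp only [Nat.add_sub_cancel]
        have : k = 0 := hk0
        subst this
        simpa using Nat.le_add_left 1 a
      · -- consecutive `t`-positions are ≥ length apart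
        have hmeq : m ≡ m + a + 1 [MOD ts.length] := by
          have h1 : q₀ + m ≡ q₀ + (m + a + 1) [MOD ts.length] := by
            unfold Nat.ModEq
            rw [hmc, hmodeq]
          exact Nat.ModEq.add_left_cancel' q₀ h1
        have hdvd : ts.length ∣ m + a + 1 - m :=
          (Nat.modEq_iff_dvd' (by omega)).mp hmeq
        have hge : ts.length ≤ m + a + 1 - m := Nat.le_of_dvd (by omega) hdvd
        have hkeq : k * ts.length = (k - 1) * ts.length + ts.length := by
          obtain ⟨k', rfl⟩ : ∃ k', k = k' + 1 := ⟨k - 1, by omega⟩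
          simp [Nat.succ_mul]
        simp only [Nat.add_sub_cancel]
        omega


end Aux

/-- correctness of the algorithm for twn-cycles, Thm. 23 of the paper:
for a simple cycle `C = {t₁,…,tₙ}`, bounds `b_r` on the number of executions of the
chained self-loop (obtained by chaining the cycle starting after the entry transition `r`)
yield, after adding `1`, a local runtime bound for `C = T'_> = T'`. -/
theorem local_bound_for_twn_cycle {L V : Type*} [Finite L]
    (PV : Set V) (hPVfin : PV.Finite)
    (ℓ₀ : L) (T : Finset (Trans L V)) (hnoIncoming : ∀ t' ∈ T, t'.tgt ≠ ℓ₀)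
    (ts : List (Trans L V)) (hne : ts ≠ [])
    (hsub : ts.toFinset ⊂ T)
    (hlocsNodup : (ts.map Trans.src).Nodup)
    (hloc : List.Chain' (fun t₁ t₂ => t₁.tgt = t₂.src) ts)
    (hcycle : (ts.getLast hne).tgt = (ts.head hne).src)
    (hnotemp : ∀ t ∈ ts, ↑t.guard.vars ⊆ PV ∧ (∀ v ∈ PV, ↑(t.update v).vars ⊆ PV) ∧
      ∀ v ∉ PV, t.update v = MvPolynomial.X v)
    (S : Set (Trans L V)) (hS : S ⊆ entrySet T ts.toFinset)
    (bR : Trans L V → Bnd V)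
    (hb : ∀ r ∈ S, ∃ i : Fin ts.length, (ts.get i).src = r.tgt ∧
      ∀ σ : V → ℤ,
        (⨆ k ∈ {k : ℕ | ∃ σ₀ σ' : V → ℤ,
            starThen PV T r (ℓ₀, σ₀) (r.tgt, σ) ∧
            relPow (Step PV (chainFold r (ts.rotate i))) k (r.tgt, σ) (r.tgt, σ')},
          (k : ℕ∞)) ≤ (bR r).eval (absState σ)) :
    IsLocalRB PV ℓ₀ T ts.toFinset ts.toFinset
      (fun r => if r ∈ S then (Bnd.const 1).add (bR r) else .const ⊤) := by
  classical
  have hn : 0 < ts.length := List.length_pos_iff.mpr hne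
  have hT'mem : ∀ u ∈ ts.toFinset, u ∈ ts := fun u hu => List.mem_toFinset.mp hu
  have hclean : ∀ u ∈ ts, Clean PV u := fun u hu => ⟨(hnotemp u hu).1, (hnotemp u hu).2.1⟩
  have hsrcinj : ∀ a b : Fin ts.length, (ts.get a).src = (ts.get b).src → a = b := by
    intro a b hab
    have h1 : (ts.map Trans.src).get ⟨↑a, by simpa using a.isLt⟩ =
        (ts.map Trans.src).get ⟨↑b, by simpa using b.isLt⟩ := by
      simp only [List.get_eq_getElem, List.getElem_map]
      exact hab
    have h2 := hlocsNodup.get_inj_iff.mp h1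
    have h3 : (↑a : ℕ) = ↑b := by simpa using h2
    exact Fin.ext h3
  have hstepw : ∀ q : ℕ, (wordOf ts hn q).tgt = (wordOf ts hn (q + 1)).src := by
    intro q
    have hmm : (q % ts.length + 1) % ts.length = (q + 1) % ts.length :=
      Nat.ModEq.add_right 1 (Nat.mod_modEq q ts.length)
    by_cases hlt : q % ts.length + 1 < ts.length
    · have h1 : (q + 1) % ts.length = q % ts.length + 1 := by
        rw [← hmm, Nat.mod_eq_of_lt hlt]
      unfold wordOf
      have hfin : ts.get ⟨(q + 1) % ts.length, Nat.mod_lt _ hn⟩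
          = ts.get ⟨q % ts.length + 1, hlt⟩ := congrArg ts.get (Fin.ext h1)
      rw [hfin]
      exact List.isChain_iff_getElem.mp hloc (q % ts.length) (by omega)
    · have hqlt : q % ts.length < ts.length := Nat.mod_lt _ hn
      have hqn : q % ts.length = ts.length - 1 := by omega
      have h0 : (q + 1) % ts.length = 0 := by
        rw [← hmm, hqn]
        have h2 : ts.length - 1 + 1 = ts.length := by omega
        rw [h2, Nat.mod_self]
      have hlast : wordOf ts hn q = ts.getLast hne := by
        rw [List.getLast_eq_getElem]
        exact congrArg ts.get (Fin.ext hqn)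
      have hhead : wordOf ts hn (q + 1) = ts.head hne := by
        have h3 : wordOf ts hn (q + 1) = ts.get ⟨0, hn⟩ := congrArg ts.get (Fin.ext h0)
        rw [h3, List.get_mk_zero]
      rw [hlast, hhead]
      exact hcycle
  intro t ht r hr σ
  by_cases hrS : r ∈ S
  · simp only [if_pos hrS]
    obtain ⟨i, hisrc, hbd⟩ := hb r hrS
    refine iSup₂_le ?_
    intro k hk
    obtain ⟨σ₀, c', hstarT, hrel⟩ := hk
    cases k with
    | zero => simp
    | succ k =>
      obtain ⟨j, hj⟩ := List.mem_iff_get.mp (List.mem_toFinset.mp ht)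
      have hwi : wordOf ts hn ↑i = ts.get i := by
        unfold wordOf; exact congrArg ts.get (Fin.ext (Nat.mod_eq_of_lt i.isLt))
      have hstart : ((r.tgt, σ) : Config L V).1 = (wordOf ts hn ↑i).src := by
        rw [hwi]; exact hisrc.symm
      obtain ⟨m, hmrel, hcase⟩ := count hn hT'mem hsrcinj hstepw t ht j hj (↑i) (k + 1)
        (r.tgt, σ) c' hstart hrel
      have hm1 : k * ts.length + 1 ≤ m := by
        rcases hcase with ⟨h0, _⟩ | ⟨_, hb2, _⟩
        · omega
        · simpa using hb2
      have hms : k * ts.length + (m - k * ts.length) = m := by omega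
      rw [← hms] at hmrel
      obtain ⟨c₁, hc₁, _⟩ := (relPow_add_iff _ _ _).mp hmrel
      have hstart2 : ((r.tgt, σ) : Config L V) = ((ts.get i).src, σ) := by rw [hisrc]
      rw [hstart2] at hc₁
      have hcyc := cycles hn hT'mem hsrcinj hstepw hclean r i k σ c₁ hc₁
      have hc₁eq : c₁ = (r.tgt, c₁.2) := by
        have : c₁.1 = r.tgt := by rw [hcyc.2, hisrc]
        exact Prod.ext this rfl
      have hkmem : k ∈ {k : ℕ | ∃ σ₀ σ' : V → ℤ,
          starThen PV T r (ℓ₀, σ₀) (r.tgt, σ) ∧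
          relPow (Step PV (chainFold r (ts.rotate ↑i))) k (r.tgt, σ) (r.tgt, σ')} := by
        refine ⟨σ₀, c₁.2, hstarT, ?_⟩
        rw [hstart2, ← hc₁eq]
        exact hcyc.1
      have hkle : (k : ℕ∞) ≤ (bR r).eval (absState σ) :=
        le_trans (le_biSup (fun k : ℕ => (k : ℕ∞)) hkmem) (hbd σ)
      have heval : (((Bnd.const 1).add (bR r)).eval (absState σ))
          = 1 + (bR r).eval (absState σ) := rfl
      rw [heval]
      have hcast : ((k + 1 : ℕ) : ℕ∞) = 1 + (k : ℕ∞) := by push_cast; ring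
      rw [hcast]
      exact add_le_add_right hkle 1
  · simp only [if_neg hrS]
    exact le_top


end Koat
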